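/- Let η > 0, f ≥ 0, and z₀ ∈ ℂ with z₀ ≠ 0. The unique minimizer over z ∈ ℂ of the function φ(z) = (1/2)(|z|² - 2 f log|z|) + (η/2)|z - z₀|² is z* = ρ · (z₀/|z₀|), where ρ = (η|z₀| + √(η²|z₀|² + 4(1+η)f)) / (2(1+η)). -/

import Mathlib

set_option maxHeartbeats 1000000

/-- Poisson proximal subproblem (Lemma 1): unique minimizer over nonzero `z ∈ ℂ` of
`φ(z) = (1/2)(|z|² - 2 f log|z|) + (η/2)|z - z₀|²` is `ρ · z₀/|z₀|`. -/
theorem poisson_prox_unique_minimizer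
    (η f : ℝ) (hη : 0 < η) (hf : 0 ≤ f) (z₀ : ℂ) (hz₀ : z₀ ≠ 0)
    (φ : ℂ → ℝ)
    (hφ : ∀ z : ℂ, φ z =
      (1 / 2) * (‖z‖ ^ 2 - 2 * f * Real.log ‖z‖)
        + (η / 2) * ‖z - z₀‖ ^ 2)
    (ρ : ℝ)
    (hρ : ρ = (η * ‖z₀‖
        + Real.sqrt (η ^ 2 * ‖z₀‖ ^ 2 + 4 * (1 + η) * f)) / (2 * (1 + η)))
    (zstar : ℂ)
    (hzstar : zstar = (ρ : ℂ) * (z₀ / (‖z₀‖ : ℂ))) :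
    zstar ≠ 0 ∧ ∀ z : ℂ, z ≠ 0 → z ≠ zstar → φ zstar < φ z := by
  set a := ‖z₀‖ with ha_def
  clear_value a
  have ha : 0 < a := ha_def ▸ norm_pos_iff.mpr hz₀
  have hη1 : (0:ℝ) < 1 + η := by linarith
  set s := Real.sqrt (η ^ 2 * a ^ 2 + 4 * (1 + η) * f) with hs_def
  have hs_sq : s ^ 2 = η ^ 2 * a ^ 2 + 4 * (1 + η) * f := Real.sq_sqrt (by positivity)
  have hs_ge : η * a ≤ s := by
    have h1 : Real.sqrt ((η*a)^2) ≤ s := Real.sqrt_le_sqrt (by nlinarith)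
    rwa [Real.sqrt_sq (by positivity)] at h1
  clear_value s
  have hρpos : 0 < ρ := by
    rw [hρ]
    apply div_pos
    · nlinarith
    · linarith
  have h2ρ : 2 * (1 + η) * ρ = η * a + s := by
    rw [hρ]; field_simp
  have hquad : (1 + η) * ρ ^ 2 = η * a * ρ + f := by
    have hs_eq : s = 2 * (1 + η) * ρ - η * a := by linarith
    rw [hs_eq] at hs_sq
    nlinarith [hs_sq, hη1]
  have hzstar_abs : ‖zstar‖ = ρ := by
    rw [hzstar, norm_mul, norm_div, Complex.norm_real, Complex.norm_real, Real.norm_eq_abs, Real.norm_eq_abs,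
      abs_of_pos hρpos, abs_of_pos ha, ← ha_def, div_self ha.ne', mul_one]
  have hzstar_ne : zstar ≠ 0 := by
    intro h
    rw [h, norm_zero] at hzstar_abs
    exact hρpos.ne hzstar_abs
  refine ⟨hzstar_ne, ?_⟩
  intro z hz hne
  set r := ‖z‖ with hr_def
  clear_value r
  have hr : 0 < r := hr_def ▸ norm_pos_iff.mpr hz
  have hlog : f * Real.log r ≤ f * Real.log ρ + f * (r / ρ - 1) := by
    have h1 : Real.log (r / ρ) ≤ r / ρ - 1 := Real.log_le_sub_one_of_pos (div_pos hr hρpos)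
    rw [Real.log_div hr.ne' hρpos.ne'] at h1
    nlinarith [mul_le_mul_of_nonneg_left h1 hf]
  have hre : (z * (starRingEnd ℂ) z₀).re ≤ r * a := by
    calc (z * (starRingEnd ℂ) z₀).re ≤ ‖z * (starRingEnd ℂ) z₀‖ :=
          Complex.re_le_norm _
      _ = r * a := by rw [norm_mul, Complex.norm_conj, ← hr_def, ← ha_def]
  have hsub : ‖z - z₀‖ ^ 2 = r ^ 2 + a ^ 2 - 2 * (z * (starRingEnd ℂ) z₀).re := by
    rw [Complex.sq_norm, Complex.normSq_sub, ← Complex.sq_norm, ← Complex.sq_norm, ← hr_def, ← ha_def]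
  have hzstarsub : ‖zstar - z₀‖ ^ 2 = (ρ - a) ^ 2 := by
    have : zstar - z₀ = (((ρ - a) / a : ℝ) : ℂ) * z₀ := by
      rw [hzstar]
      have haC : ((a:ℝ):ℂ) ≠ 0 := by exact_mod_cast ha.ne'
      push_cast
      field_simp
    rw [this, norm_mul, Complex.norm_real, Real.norm_eq_abs, ← ha_def, mul_pow, sq_abs]
    field_simp
  have hdiv : f * (r / ρ - 1) = ((1 + η) * ρ - η * a) * (r - ρ) := by
    have hfρ : f = (1 + η) * ρ ^ 2 - η * a * ρ := by linarith
    rw [hfρ]; field_simp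
  rw [hφ z, hφ zstar, hzstar_abs, hzstarsub, hsub, ← hr_def]
  rcases eq_or_ne r ρ with hcase | hcase
  · -- r = ρ, strict non-alignment
    have hre_lt : (z * (starRingEnd ℂ) z₀).re < r * a := by
      rcases lt_or_eq_of_le hre with h | h
      · exact h
      · exfalso
        apply hne
        set w := z * (starRingEnd ℂ) z₀ with hw_def
        clear_value w
        have habsw : ‖w‖ = r * a := by
          rw [hw_def, norm_mul, Complex.norm_conj, ← hr_def, ← ha_def]
        have him : w.im = 0 := by
          have h1 : ‖w‖ ^ 2 = w.re * w.re + w.im * w.im := by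
            rw [Complex.sq_norm, Complex.normSq_apply]
          rw [habsw, ← h] at h1
          have h2 : w.im * w.im = 0 := by nlinarith
          exact mul_self_eq_zero.mp h2
        have hw_eq : w = ((r * a : ℝ) : ℂ) := by
          simp [Complex.ext_iff, h, him]
        have hnsq : (starRingEnd ℂ) z₀ * z₀ = ((a ^ 2 : ℝ) : ℂ) := by
          rw [mul_comm, Complex.mul_conj, ← Complex.sq_norm, ← ha_def]
        have hz_eq : z * ((a ^ 2 : ℝ) : ℂ) = ((r * a : ℝ) : ℂ) * z₀ := by
          rw [← hnsq, ← mul_assoc, ← hw_def, hw_eq]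
        rw [hzstar, ← hcase]
        have haC : ((a:ℝ):ℂ) ≠ 0 := by exact_mod_cast ha.ne'
        refine mul_right_cancel₀ (pow_ne_zero 2 haC) ?_
        push_cast at hz_eq ⊢
        field_simp
        exact mul_right_cancel₀ haC (by linear_combination hz_eq)
    rw [hcase]
    have hre' : η * (z * (starRingEnd ℂ) z₀).re < η * (ρ * a) := by
      rw [← hcase]
      exact mul_lt_mul_of_pos_left hre_lt hη
    have key2 : (ρ - a) ^ 2 = ρ ^ 2 + a ^ 2 - 2 * (ρ * a) := by ring
    nlinarith [hre', key2]
  · -- r ≠ ρ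
    have h1 : f * Real.log r ≤ f * Real.log ρ + ((1 + η) * ρ - η * a) * (r - ρ) := by
      rw [← hdiv]; exact hlog
    have hre' : η * (z * (starRingEnd ℂ) z₀).re ≤ η * (r * a) :=
      mul_le_mul_of_nonneg_left hre hη.le
    have key : (1/2) * r ^ 2 - ((1 + η) * ρ - η * a) * (r - ρ)
        + η / 2 * (r ^ 2 + a ^ 2 - 2 * (r * a)) - (1/2) * ρ ^ 2 - η / 2 * (ρ - a) ^ 2
        = (1 + η) / 2 * (r - ρ) ^ 2 := by ring
    have hsq : 0 < (1 + η) / 2 * (r - ρ) ^ 2 :=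
      mul_pos (div_pos hη1 two_pos) (pow_two_pos_of_ne_zero (sub_ne_zero.mpr hcase))
    linarith [h1, hre', key, hsq]
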